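/- Let ℙ = (P,≤) be the random (generic) poset, a ∈ P, and A = {x : x < a}, C = {x : x > a}, B = {x : x ⊥ a}. Then the rotation R_{A,C} applied to the poset P \ {a} yields a poset satisfying the extension property (EXT), and hence isomorphic to the random poset. In particular, there exists a rotation of the random poset whose image is isomorphic to the random poset. -/

import Mathlib

universe u

variable {P : Type u}

/-- `A` is a downset (downward closed set) w.r.t. the relation `le`. -/
def IsDownset (le : P → P → Prop) (A : Set P) : Prop :=
  ∀ ⦃x⦄, x ∈ A → ∀ ⦃y⦄, le y x → y ∈ A

/-- `C` is an upset (upward closed set) w.r.t. the relation `le`. -/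
def IsUpset (le : P → P → Prop) (C : Set P) : Prop :=
  ∀ ⦃x⦄, x ∈ C → ∀ ⦃y⦄, le x y → y ∈ C

/-- `x` and `y` are incomparable w.r.t. `le`. -/
def Incomp (le : P → P → Prop) (x y : P) : Prop := ¬ le x y ∧ ¬ le y x

/-- Strictly less: `le x y` and `x ≠ y`. -/
def SLT (le : P → P → Prop) (x y : P) : Prop := le x y ∧ x ≠ y

/-- The conditions under which the rotation `R_{A,C}` is defined:
`A`, `C` disjoint, `A` a downset, `C` an upset, and every element of `A`
strictly below every element of `C`. -/
def RotOK (le : P → P → Prop) (A C : Set P) : Prop :=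
  Disjoint A C ∧ IsDownset le A ∧ IsUpset le C ∧
    ∀ a ∈ A, ∀ c ∈ C, le a c ∧ a ≠ c

/-- The rotation `R_{A,C}` of the relation `le`; the middle block `B` is the
complement of `A ∪ C`. -/
def Rot (le : P → P → Prop) (A C : Set P) : P → P → Prop := fun x y =>
  (((x ∈ A ∧ y ∈ A) ∨ (x ∉ A ∧ x ∉ C ∧ y ∉ A ∧ y ∉ C) ∨ (x ∈ C ∧ y ∈ C)) ∧ le x y) ∨
  (x ∉ A ∧ x ∉ C ∧ y ∈ A ∧ Incomp le x y) ∨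
  (x ∈ C ∧ y ∈ A) ∨
  (x ∈ C ∧ y ∉ A ∧ y ∉ C ∧ Incomp le x y)

/-- One rotation step between two relations on the same domain. -/
def RotStep (le le' : P → P → Prop) : Prop :=
  ∃ A C, RotOK le A C ∧ le' = Rot le A C

/-- Rotation-equivalence: the reflexive-transitive closure of rotation steps. -/
def RotEquiv (le le' : P → P → Prop) : Prop :=
  Relation.ReflTransGen RotStep le le'

/-- Restriction of a relation to a subset (as a relation on the subtype). -/
def restrictRel (le : P → P → Prop) (S : Set P) : S → S → Prop :=
  fun x y => le x.1 y.1

/-- The set of maximal elements of a relation. -/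
def maxSet (le : P → P → Prop) : Set P := {x | ∀ y, le x y → y = x}

/-- The rotation class `O₂` of a three element poset `{a,b,c}`:
chains `a<b<c`, `b<c<a`, `c<a<b`, and the posets with single comparability
`a<b`, `b<c`, `c<a`. -/
def O2rel (le : P → P → Prop) (a b c : P) : Prop :=
  (SLT le a b ∧ SLT le b c) ∨ (SLT le b c ∧ SLT le c a) ∨ (SLT le c a ∧ SLT le a b) ∨
  (SLT le a b ∧ Incomp le a c ∧ Incomp le b c) ∨
  (SLT le b c ∧ Incomp le b a ∧ Incomp le c a) ∨
  (SLT le c a ∧ Incomp le c b ∧ Incomp le a b)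

/-- The rotation class `O₃`: the dual of `O₂`. -/
def O3rel (le : P → P → Prop) (a b c : P) : Prop := O2rel le c b a

/-- The rotation class `O₁`: the antichain together with the `V` and `Λ` shaped
three element posets. -/
def O1rel (le : P → P → Prop) (a b c : P) : Prop :=
  (Incomp le a b ∧ Incomp le b c ∧ Incomp le a c) ∨
  (SLT le a b ∧ SLT le a c ∧ Incomp le b c) ∨
  (SLT le b a ∧ SLT le b c ∧ Incomp le a c) ∨
  (SLT le c a ∧ SLT le c b ∧ Incomp le a b) ∨
  (SLT le b a ∧ SLT le c a ∧ Incomp le b c) ∨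
  (SLT le a b ∧ SLT le c b ∧ Incomp le a c) ∨
  (SLT le a c ∧ SLT le b c ∧ Incomp le a b)

/-- The extension property (EXT) characterizing the random poset: every
one-point extension of a finite subposet is realized by some element. -/
def ExtProp (le : P → P → Prop) : Prop :=
  ∀ Q : Set P, Q.Finite → ∀ D U : Set P, D ⊆ Q → U ⊆ Q → Disjoint D U →
    (∀ x ∈ Q, ∀ d ∈ D, le x d → x ∈ D) →
    (∀ x ∈ Q, ∀ u ∈ U, le u x → x ∈ U) →
    (∀ d ∈ D, ∀ u ∈ U, le d u ∧ d ≠ u) →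
    ∃ s, s ∉ Q ∧ (∀ d ∈ D, le d s ∧ d ≠ s) ∧ (∀ u ∈ U, le s u ∧ s ≠ u) ∧
      ∀ x ∈ Q, x ∉ D → x ∉ U → Incomp le s x


section BackForth

structure RelOrd {α : Type*} (r : α → α → Prop) : Prop where
  refl : ∀ x, r x x
  trans : ∀ {x y z}, r x y → r y z → r x z
  antisymm : ∀ {x y}, r x y → r y x → x = y

variable {α : Type*} {β : Type*} {r1 : α → α → Prop} {r2 : β → β → Prop}

def GoodL (r1 : α → α → Prop) (r2 : β → β → Prop) (l : List (α × β)) : Prop :=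
  ∀ p ∈ l, ∀ q ∈ l, r1 p.1 q.1 ↔ r2 p.2 q.2

lemma GoodL.swap {l : List (α × β)} (h : GoodL r1 r2 l) :
    GoodL r2 r1 (l.map Prod.swap) := by
  intro p hp q hq
  simp only [List.mem_map] at hp hq
  obtain ⟨p', hp', rfl⟩ := hp
  obtain ⟨q', hq', rfl⟩ := hq
  exact (h p' hp' q' hq').symm

lemma goodL_extend (o1 : RelOrd r1) (o2 : RelOrd r2) (h2 : ExtProp r2)
    {l : List (α × β)} (hl : GoodL r1 r2 l) (x : α) :
    ∃ y, GoodL r1 r2 ((x, y) :: l) := by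
  by_cases hx : ∃ p ∈ l, p.1 = x
  · obtain ⟨p, hp, hpx⟩ := hx
    refine ⟨p.2, ?_⟩
    intro q hq q' hq'
    rcases List.mem_cons.1 hq with rfl | hq <;> rcases List.mem_cons.1 hq' with rfl | hq'
    · have := hl p hp p hp; rw [hpx] at this; exact this
    · have := hl p hp q' hq'; rwa [hpx] at this
    · have := hl q hq p hp; rwa [hpx] at this
    · exact hl q hq q' hq'
  · push_neg at hx
    have key2 : ∀ p ∈ l, ∀ q ∈ l, p.2 = q.2 → p.1 = q.1 := by
      intro p hp q hq h
      refine o1.antisymm ((hl p hp q hq).2 ?_) ((hl q hq p hp).2 ?_)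
      · rw [h]; exact o2.refl q.2
      · rw [h]; exact o2.refl q.2
    set Q : Set β := Prod.snd '' {p | p ∈ l} with hQdef
    have hQfin : Q.Finite := (l.finite_toSet).image _
    set D : Set β := {y | ∃ p ∈ l, p.2 = y ∧ r1 p.1 x} with hDdef
    set U : Set β := {y | ∃ p ∈ l, p.2 = y ∧ r1 x p.1} with hUdef
    have hDQ : D ⊆ Q := by rintro y ⟨p, hp, rfl, -⟩; exact ⟨p, hp, rfl⟩
    have hUQ : U ⊆ Q := by rintro y ⟨p, hp, rfl, -⟩; exact ⟨p, hp, rfl⟩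
    have hdis : Disjoint D U := by
      rw [Set.disjoint_left]
      rintro y ⟨p, hp, rfl, hpx1⟩ ⟨q, hq, hqp, hxq⟩
      have h1 : q.1 = p.1 := key2 q hq p hp hqp
      rw [h1] at hxq
      exact hx p hp (o1.antisymm hpx1 hxq)
    have closD : ∀ y ∈ Q, ∀ d ∈ D, r2 y d → y ∈ D := by
      rintro y ⟨p', hp', rfl⟩ d ⟨p, hp, rfl, hpx1⟩ hyd
      exact ⟨p', hp', rfl, o1.trans ((hl p' hp' p hp).2 hyd) hpx1⟩
    have closU : ∀ y ∈ Q, ∀ u ∈ U, r2 u y → y ∈ U := by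
      rintro y ⟨p', hp', rfl⟩ u ⟨p, hp, rfl, hpx1⟩ hyd
      exact ⟨p', hp', rfl, o1.trans hpx1 ((hl p hp p' hp').2 hyd)⟩
    have hDU : ∀ d ∈ D, ∀ u ∈ U, r2 d u ∧ d ≠ u := by
      rintro d ⟨p, hp, rfl, hpx1⟩ u ⟨q, hq, rfl, hxq⟩
      refine ⟨(hl p hp q hq).1 (o1.trans hpx1 hxq), fun h => ?_⟩
      have h1 : p.1 = q.1 := key2 p hp q hq h
      rw [h1] at hpx1
      exact hx q hq (o1.antisymm hpx1 hxq)
    obtain ⟨s, hsQ, hsD, hsU, hsI⟩ := h2 Q hQfin D U hDQ hUQ hdis closD closU hDU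
    refine ⟨s, ?_⟩
    intro q hq q' hq'
    rcases List.mem_cons.1 hq with rfl | hq <;> rcases List.mem_cons.1 hq' with rfl | hq'
    · exact iff_of_true (o1.refl x) (o2.refl s)
    · -- r1 x q'.1 ↔ r2 s q'.2
      constructor
      · intro h; exact (hsU q'.2 ⟨q', hq', rfl, h⟩).1
      · intro h
        by_cases hu : q'.2 ∈ U
        · obtain ⟨p, hp, hpq, hxp⟩ := hu
          have hpq1 : r1 p.1 q'.1 := (hl p hp q' hq').2 (by rw [hpq]; exact o2.refl _)
          exact o1.trans hxp hpq1
        · by_cases hd : q'.2 ∈ D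
          · have h1 := hsD q'.2 hd
            exact absurd (o2.antisymm h h1.1) (Ne.symm h1.2)
          · exact absurd h (hsI q'.2 ⟨q', hq', rfl⟩ hd hu).1
    · -- r1 q.1 x ↔ r2 q.2 s
      constructor
      · intro h; exact (hsD q.2 ⟨q, hq, rfl, h⟩).1
      · intro h
        by_cases hd : q.2 ∈ D
        · obtain ⟨p, hp, hpq, hpx1⟩ := hd
          have hpq1 : r1 q.1 p.1 := (hl q hq p hp).2 (by rw [hpq]; exact o2.refl _)
          exact o1.trans hpq1 hpx1
        · by_cases hu : q.2 ∈ U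
          · have h1 := hsU q.2 hu
            exact absurd (o2.antisymm h1.1 h) h1.2
          · exact absurd h (hsI q.2 ⟨q, hq, rfl⟩ hd hu).2
    · exact hl q hq q' hq'

lemma goodL_extend2 (o1 : RelOrd r1) (o2 : RelOrd r2)
    (h1 : ExtProp r1) (h2 : ExtProp r2)
    {l : List (α × β)} (hl : GoodL r1 r2 l) (x : α) (y : β) :
    ∃ l', GoodL r1 r2 l' ∧ (∀ p ∈ l, p ∈ l') ∧ (∃ b, (x, b) ∈ l') ∧ ∃ c, (c, y) ∈ l' := by
  obtain ⟨b, hb⟩ := goodL_extend o1 o2 h2 hl x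
  obtain ⟨c, hc⟩ := goodL_extend o2 o1 h1 hb.swap y
  have he : ((y, c) :: ((x, b) :: l).map Prod.swap).map Prod.swap = (c, y) :: (x, b) :: l := by
    simp [List.map_map, Function.comp_def]
  refine ⟨(c, y) :: (x, b) :: l, ?_, ?_, ⟨b, ?_⟩, ⟨c, ?_⟩⟩
  · have := hc.swap; rwa [he] at this
  · intro p hp; exact List.mem_cons_of_mem _ (List.mem_cons_of_mem _ hp)
  · exact List.mem_cons_of_mem _ (List.mem_cons_self)
  · exact List.mem_cons_self

theorem iso_of_extProp [Countable α] [Countable β]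
    (o1 : RelOrd r1) (o2 : RelOrd r2) (h1 : ExtProp r1) (h2 : ExtProp r2) :
    ∃ e : α ≃ β, ∀ x y, r1 x y ↔ r2 (e x) (e y) := by
  have hne1 : Nonempty α := by
    obtain ⟨s, -⟩ := h1 ∅ Set.finite_empty ∅ ∅ (by simp) (by simp) (by simp)
      (by simp) (by simp) (by simp)
    exact ⟨s⟩
  have hne2 : Nonempty β := by
    obtain ⟨s, -⟩ := h2 ∅ Set.finite_empty ∅ ∅ (by simp) (by simp) (by simp)
      (by simp) (by simp) (by simp)
    exact ⟨s⟩
  obtain ⟨f, hf⟩ := exists_surjective_nat α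
  obtain ⟨g, hg⟩ := exists_surjective_nat β
  choose next hnext hsub hxx hyy using
    fun (l : {l : List (α × β) // GoodL r1 r2 l}) (n : ℕ) =>
      goodL_extend2 o1 o2 h1 h2 l.2 (f n) (g n)
  let L : ℕ → {l : List (α × β) // GoodL r1 r2 l} := fun n =>
    Nat.rec ⟨[], by intro p hp; exact absurd hp (List.not_mem_nil)⟩
      (fun n ih => ⟨next ih n, hnext ih n⟩) n
  have hLsucc : ∀ n, ∀ p ∈ (L n).1, p ∈ (L (n+1)).1 := fun n => hsub (L n) n
  have hmono : ∀ m n, m ≤ n → ∀ p ∈ (L m).1, p ∈ (L n).1 := by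
    intro m n h
    induction n, h using Nat.le_induction with
    | base => exact fun p hp => hp
    | succ n hmn ih => exact fun p hp => hLsucc n p (ih p hp)
  have hmatch : ∀ {m n : ℕ} {p q}, p ∈ (L m).1 → q ∈ (L n).1 →
      (r1 p.1 q.1 ↔ r2 p.2 q.2) := by
    intro m n p q hp hq
    rcases le_total m n with h | h
    · exact (L n).2 p (hmono m n h p hp) q hq
    · exact (L m).2 p hp q (hmono n m h q hq)
  have hxall : ∀ x : α, ∃ b n, (x, b) ∈ (L n).1 := by
    intro x
    obtain ⟨n, rfl⟩ := hf x
    obtain ⟨b, hb⟩ := hxx (L n) n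
    exact ⟨b, n + 1, hb⟩
  have funl : ∀ {m n : ℕ} {x b b'}, (x, b) ∈ (L m).1 → (x, b') ∈ (L n).1 → b = b' := by
    intro m n x b b' hb hb'
    exact o2.antisymm ((hmatch hb hb').1 (o1.refl x)) ((hmatch hb' hb).1 (o1.refl x))
  choose F N hF using hxall
  have inj : Function.Injective F := by
    intro x x' h
    refine o1.antisymm ((hmatch (hF x) (hF x')).2 ?_) ((hmatch (hF x') (hF x)).2 ?_)
    · rw [h]; exact o2.refl _
    · rw [h]; exact o2.refl _
  have surj : Function.Surjective F := by
    intro y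
    obtain ⟨n, rfl⟩ := hg y
    obtain ⟨c, hc⟩ := hyy (L n) n
    exact ⟨c, funl (n := n+1) (hF c) hc⟩
  refine ⟨Equiv.ofBijective F ⟨inj, surj⟩, fun x y => ?_⟩
  exact hmatch (hF x) (hF y)

end BackForth

section RotSec

variable {P : Type u} (le : P → P → Prop) (a : P)

def rrel : {x : P // x ≠ a} → {x : P // x ≠ a} → Prop :=
  Rot (fun x y => le x.1 y.1) {x | le x.1 a} {x | le a x.1}

lemma rrel_def (x y : {x : P // x ≠ a}) : rrel le a x y ↔
    ((le ↑x a ∧ le ↑y a ∨ (¬le ↑x a ∧ ¬le a ↑x ∧ ¬le ↑y a ∧ ¬le a ↑y) ∨ le a ↑x ∧ le a ↑y) ∧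
      le ↑x ↑y) ∨
    (¬le ↑x a ∧ ¬le a ↑x ∧ le ↑y a ∧ ¬le ↑x ↑y ∧ ¬le ↑y ↑x) ∨
    (le a ↑x ∧ le ↑y a) ∨
    (le a ↑x ∧ ¬le ↑y a ∧ ¬le a ↑y ∧ ¬le ↑x ↑y ∧ ¬le ↑y ↑x) := Iff.rfl

variable {le a}

lemma hAC (o : RelOrd le) (x : {x : P // x ≠ a}) (h1 : le ↑x a) (h2 : le a ↑x) : False :=
  x.2 (o.antisymm h1 h2)

lemma rrel_refl (o : RelOrd le) : ∀ x, rrel le a x x := by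
  intro x
  rw [rrel_def]
  by_cases hxa : le ↑x a
  · exact Or.inl ⟨Or.inl ⟨hxa, hxa⟩, o.refl _⟩
  · by_cases hax : le a ↑x
    · exact Or.inl ⟨Or.inr (Or.inr ⟨hax, hax⟩), o.refl _⟩
    · exact Or.inl ⟨Or.inr (Or.inl ⟨hxa, hax, hxa, hax⟩), o.refl _⟩

lemma rrel_trans (o : RelOrd le) : ∀ {x y z}, rrel le a x y → rrel le a y z → rrel le a x z := by
  intro x y z h1 h2
  rw [rrel_def] at h1 h2 ⊢
  rcases h1 with ⟨⟨hxa, hya⟩ | ⟨hxa, hax, hya, hay⟩ | ⟨hax, hay⟩, hxy⟩ |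
    ⟨hxa, hax, hya, hnxy, hnyx⟩ | ⟨hax, hya⟩ | ⟨hax, hya, hay, hnxy, hnyx⟩
  · -- x,y ∈ A
    rcases h2 with ⟨⟨hya2, hza⟩ | ⟨hya2, _, _, _⟩ | ⟨hay2, _⟩, hyz⟩ |
      ⟨hya2, _, _, _, _⟩ | ⟨hay2, _⟩ | ⟨hay2, _, _, _, _⟩
    · exact Or.inl ⟨Or.inl ⟨hxa, hza⟩, o.trans hxy hyz⟩
    · exact absurd hya hya2
    · exact (hAC o y hya hay2).elim
    · exact absurd hya hya2
    · exact (hAC o y hya hay2).elim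
    · exact (hAC o y hya hay2).elim
  · -- x,y ∈ B
    rcases h2 with ⟨⟨hya2, hza⟩ | ⟨_, _, hza, haz⟩ | ⟨hay2, _⟩, hyz⟩ |
      ⟨_, _, hza, hnyz, hnzy⟩ | ⟨hay2, _⟩ | ⟨hay2, _, _, _, _⟩
    · exact absurd hya2 hya
    · exact Or.inl ⟨Or.inr (Or.inl ⟨hxa, hax, hza, haz⟩), o.trans hxy hyz⟩
    · exact absurd hay2 hay
    · exact Or.inr (Or.inl ⟨hxa, hax, hza,
        fun h => hxa (o.trans h hza), fun h => hnzy (o.trans h hxy)⟩)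
    · exact absurd hay2 hay
    · exact absurd hay2 hay
  · -- x,y ∈ C
    rcases h2 with ⟨⟨hya2, hza⟩ | ⟨_, hay2, _, _⟩ | ⟨_, haz⟩, hyz⟩ |
      ⟨_, hay2, _, _, _⟩ | ⟨hay2, hza⟩ | ⟨hay2, hza, haz, hnyz, hnzy⟩
    · exact (hAC o y hya2 hay).elim
    · exact absurd hay hay2
    · exact Or.inl ⟨Or.inr (Or.inr ⟨hax, haz⟩), o.trans hxy hyz⟩
    · exact absurd hay hay2
    · exact Or.inr (Or.inr (Or.inl ⟨hax, hza⟩))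
    · exact Or.inr (Or.inr (Or.inr ⟨hax, hza, haz,
        fun h => haz (o.trans hax h), fun h => hnzy (o.trans h hxy)⟩))
  · -- x ∈ B, y ∈ A (incomp)
    rcases h2 with ⟨⟨hya2, hza⟩ | ⟨hya2, _, _, _⟩ | ⟨hay2, _⟩, hyz⟩ |
      ⟨hya2, _, _, _, _⟩ | ⟨hay2, _⟩ | ⟨hay2, _, _, _, _⟩
    · exact Or.inr (Or.inl ⟨hxa, hax, hza,
        fun h => hxa (o.trans h hza), fun h => hnyx (o.trans hyz h)⟩)
    · exact absurd hya hya2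
    · exact (hAC o y hya hay2).elim
    · exact absurd hya hya2
    · exact (hAC o y hya hay2).elim
    · exact (hAC o y hya hay2).elim
  · -- x ∈ C, y ∈ A
    rcases h2 with ⟨⟨hya2, hza⟩ | ⟨hya2, _, _, _⟩ | ⟨hay2, _⟩, hyz⟩ |
      ⟨hya2, _, _, _, _⟩ | ⟨hay2, _⟩ | ⟨hay2, _, _, _, _⟩
    · exact Or.inr (Or.inr (Or.inl ⟨hax, hza⟩))
    · exact absurd hya hya2
    · exact (hAC o y hya hay2).elim
    · exact absurd hya hya2
    · exact (hAC o y hya hay2).elim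
    · exact (hAC o y hya hay2).elim
  · -- x ∈ C, y ∈ B (incomp)
    rcases h2 with ⟨⟨hya2, hza⟩ | ⟨_, _, hza, haz⟩ | ⟨hay2, _⟩, hyz⟩ |
      ⟨_, _, hza, hnyz, hnzy⟩ | ⟨hay2, _⟩ | ⟨hay2, _, _, _, _⟩
    · exact absurd hya2 hya
    · exact Or.inr (Or.inr (Or.inr ⟨hax, hza, haz,
        fun h => haz (o.trans hax h), fun h => hnyx (o.trans hyz h)⟩))
    · exact absurd hay2 hay
    · exact Or.inr (Or.inr (Or.inl ⟨hax, hza⟩))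
    · exact absurd hay2 hay
    · exact absurd hay2 hay

lemma rrel_antisymm (o : RelOrd le) : ∀ {x y}, rrel le a x y → rrel le a y x → x = y := by
  intro x y h1 h2
  rw [rrel_def] at h1 h2
  rcases h1 with ⟨⟨hxa, hya⟩ | ⟨hxa, hax, hya, hay⟩ | ⟨hax, hay⟩, hxy⟩ |
    ⟨hxa, hax, hya, hnxy, hnyx⟩ | ⟨hax, hya⟩ | ⟨hax, hya, hay, hnxy, hnyx⟩
  · rcases h2 with ⟨⟨hya2, hxa2⟩ | ⟨hya2, _, _, _⟩ | ⟨hay2, _⟩, hyx⟩ |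
      ⟨hya2, _, _, _, _⟩ | ⟨hay2, _⟩ | ⟨hay2, _, _, _, _⟩
    · exact Subtype.ext (o.antisymm hxy hyx)
    · exact absurd hya hya2
    · exact (hAC o y hya hay2).elim
    · exact absurd hya hya2
    · exact (hAC o y hya hay2).elim
    · exact (hAC o y hya hay2).elim
  · rcases h2 with ⟨⟨hya2, hxa2⟩ | ⟨_, _, _, _⟩ | ⟨hay2, _⟩, hyx⟩ |
      ⟨_, _, hxa2, _, _⟩ | ⟨hay2, _⟩ | ⟨hay2, _, _, _, _⟩
    · exact absurd hya2 hya
    · exact Subtype.ext (o.antisymm hxy hyx)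
    · exact absurd hay2 hay
    · exact absurd hxa2 hxa
    · exact absurd hay2 hay
    · exact absurd hay2 hay
  · rcases h2 with ⟨⟨hya2, hxa2⟩ | ⟨_, hay2, _, _⟩ | ⟨_, _⟩, hyx⟩ |
      ⟨_, hay2, _, _, _⟩ | ⟨hay2, hxa2⟩ | ⟨hay2, hxa2, hax2, _, _⟩
    · exact (hAC o y hya2 hay).elim
    · exact absurd hay hay2
    · exact Subtype.ext (o.antisymm hxy hyx)
    · exact absurd hay hay2
    · exact (hAC o x hxa2 hax).elim
    · exact absurd hax hax2
  · rcases h2 with ⟨⟨hya2, hxa2⟩ | ⟨hya2, _, _, _⟩ | ⟨hay2, _⟩, hyx⟩ |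
      ⟨hya2, _, _, _, _⟩ | ⟨hay2, _⟩ | ⟨hay2, _, _, _, _⟩
    · exact absurd hxa2 hxa
    · exact absurd hya hya2
    · exact (hAC o y hya hay2).elim
    · exact absurd hya hya2
    · exact (hAC o y hya hay2).elim
    · exact (hAC o y hya hay2).elim
  · rcases h2 with ⟨⟨hya2, hxa2⟩ | ⟨hya2, _, _, hax2⟩ | ⟨hay2, _⟩, hyx⟩ |
      ⟨hya2, _, hxa2, _, _⟩ | ⟨hay2, hxa2⟩ | ⟨hay2, _, _, _, _⟩
    · exact (hAC o x hxa2 hax).elim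
    · exact absurd hax hax2
    · exact (hAC o y hya hay2).elim
    · exact (hAC o x hxa2 hax).elim
    · exact (hAC o y hya hay2).elim
    · exact (hAC o y hya hay2).elim
  · rcases h2 with ⟨⟨hya2, hxa2⟩ | ⟨_, _, _, hax2⟩ | ⟨hay2, _⟩, hyx⟩ |
      ⟨_, _, hxa2, _, _⟩ | ⟨hay2, _⟩ | ⟨hay2, _, _, _, _⟩
    · exact absurd hya2 hya
    · exact absurd hax hax2
    · exact absurd hay2 hay
    · exact (hAC o x hxa2 hax).elim
    · exact absurd hay2 hay
    · exact absurd hay2 hay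

end RotSec

section RotExt

variable {P : Type u} {le : P → P → Prop} {a : P}

lemma rrel_A_right (o : RelOrd le) {x y : {x : P // x ≠ a}}
    (h : rrel le a x y) (hx : le ↑x a) : le ↑y a := by
  rcases (rrel_def le a x y).1 h with ⟨⟨_, h2⟩ | ⟨h1, _⟩ | ⟨h1, _⟩, _⟩ |
    ⟨h1, _, _, _, _⟩ | ⟨h1, h2⟩ | ⟨h1, _, _, _, _⟩
  · exact h2
  · exact absurd hx h1
  · exact (hAC o x hx h1).elim
  · exact absurd hx h1
  · exact h2
  · exact (hAC o x hx h1).elim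

lemma rrel_C_left (o : RelOrd le) {x y : {x : P // x ≠ a}}
    (h : rrel le a x y) (hy : le a ↑y) : le a ↑x := by
  rcases (rrel_def le a x y).1 h with ⟨⟨_, h2⟩ | ⟨_, _, _, h4⟩ | ⟨h1, _⟩, _⟩ |
    ⟨_, _, h3, _, _⟩ | ⟨h1, _⟩ | ⟨h1, _, _, _, _⟩
  · exact (hAC o y h2 hy).elim
  · exact absurd hy h4
  · exact h1
  · exact (hAC o y h3 hy).elim
  · exact h1
  · exact h1

lemma rrel_A_A_le (o : RelOrd le) {x y : {x : P // x ≠ a}}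
    (h : rrel le a x y) (hx : le ↑x a) : le ↑x ↑y := by
  rcases (rrel_def le a x y).1 h with ⟨_, hle⟩ |
    ⟨h1, _, _, _, _⟩ | ⟨h1, _⟩ | ⟨h1, _, _, _, _⟩
  · exact hle
  · exact absurd hx h1
  · exact (hAC o x hx h1).elim
  · exact (hAC o x hx h1).elim

lemma rrel_C_C_le (o : RelOrd le) {x y : {x : P // x ≠ a}}
    (h : rrel le a x y) (hy : le a ↑y) : le ↑x ↑y := by
  rcases (rrel_def le a x y).1 h with ⟨_, hle⟩ |
    ⟨_, _, h3, _, _⟩ | ⟨_, h2⟩ | ⟨_, _, h3, _, _⟩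
  · exact hle
  · exact (hAC o y h3 hy).elim
  · exact (hAC o y h2 hy).elim
  · exact absurd hy h3

lemma rrel_ext (o : RelOrd le) (hext : ExtProp le) : ExtProp (rrel le a) := by
  intro Q hQ D U hDQ hUQ hdis closD closU hDU
  by_cases hcA : ∃ d ∈ D, le ↑d a
  · obtain ⟨d0, hd0D, hd0a⟩ := hcA
    have fU : ∀ u ∈ U, le ↑u a := fun u hu => rrel_A_right o (hDU d0 hd0D u hu).1 hd0a
    have fC : ∀ x ∈ Q, le a ↑x → x ∈ D := fun x hx hax =>
      closD x hx d0 hd0D ((rrel_def le a x d0).2 (Or.inr (Or.inr (Or.inl ⟨hax, hd0a⟩))))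
    set Q0 : Set P := insert a (Subtype.val '' Q) with hQ0def
    have hQ0fin : Q0.Finite := (hQ.image _).insert a
    set D' : Set P := Subtype.val '' {d | d ∈ D ∧ le ↑d a} with hD'def
    set U' : Set P := insert a (Subtype.val ''
      {x | x ∈ U ∨ (x ∈ Q ∧ le a ↑x) ∨ (x ∈ Q ∧ ¬le ↑x a ∧ ¬le a ↑x ∧ x ∉ D)}) with hU'def
    have hD'Q : D' ⊆ Q0 := by
      rintro p ⟨d, ⟨hdD, -⟩, rfl⟩
      exact Set.mem_insert_iff.2 (Or.inr ⟨d, hDQ hdD, rfl⟩)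
    have hU'Q : U' ⊆ Q0 := by
      rintro p hp
      rcases Set.mem_insert_iff.1 hp with rfl | ⟨u, hu, rfl⟩
      · exact Set.mem_insert _ _
      · rcases hu with h | h | h
        · exact Set.mem_insert_iff.2 (Or.inr ⟨u, hUQ h, rfl⟩)
        · exact Set.mem_insert_iff.2 (Or.inr ⟨u, h.1, rfl⟩)
        · exact Set.mem_insert_iff.2 (Or.inr ⟨u, h.1, rfl⟩)
    have hdis' : Disjoint D' U' := by
      rw [Set.disjoint_left]
      rintro p ⟨d, ⟨hdD, hda⟩, rfl⟩ hpU
      rcases Set.mem_insert_iff.1 hpU with h | ⟨u, hu, huv⟩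
      · exact d.2 h
      · rw [Subtype.coe_injective huv] at hu
        rcases hu with h | h | h
        · exact Set.disjoint_left.1 hdis hdD h
        · exact hAC o d hda h.2
        · exact h.2.1 hda
    have closD' : ∀ p ∈ Q0, ∀ q ∈ D', le p q → p ∈ D' := by
      intro p hp q hq hpq
      obtain ⟨d, ⟨hdD, hda⟩, rfl⟩ := hq
      rcases Set.mem_insert_iff.1 hp with rfl | ⟨x, hxQ, rfl⟩
      · exact (hAC o d hda hpq).elim
      · have hxa : le ↑x a := o.trans hpq hda
        exact ⟨x, ⟨closD x hxQ d hdD ((rrel_def le a x d).2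
          (Or.inl ⟨Or.inl ⟨hxa, hda⟩, hpq⟩)), hxa⟩, rfl⟩
    have closU' : ∀ p ∈ Q0, ∀ q ∈ U', le q p → p ∈ U' := by
      intro p hp q hq hqp
      rcases Set.mem_insert_iff.1 hp with rfl | ⟨x, hxQ, rfl⟩
      · exact Set.mem_insert _ _
      · rcases Set.mem_insert_iff.1 hq with rfl | ⟨u, hu, rfl⟩
        · exact Set.mem_insert_iff.2 (Or.inr ⟨x, Or.inr (Or.inl ⟨hxQ, hqp⟩), rfl⟩)
        · rcases hu with huU | ⟨huQ, hau⟩ | ⟨huQ, hua, hau, huD⟩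
          · have hu0a := fU u huU
            by_cases hxa : le ↑x a
            · exact Set.mem_insert_iff.2 (Or.inr ⟨x, Or.inl (closU x hxQ u huU
                ((rrel_def le a u x).2 (Or.inl ⟨Or.inl ⟨hu0a, hxa⟩, hqp⟩))), rfl⟩)
            · by_cases hax : le a ↑x
              · exact Set.mem_insert_iff.2 (Or.inr ⟨x, Or.inr (Or.inl ⟨hxQ, hax⟩), rfl⟩)
              · refine Set.mem_insert_iff.2 (Or.inr ⟨x, Or.inr (Or.inr
                  ⟨hxQ, hxa, hax, fun hxD => ?_⟩), rfl⟩)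
                rcases (rrel_def le a x u).1 (hDU x hxD u huU).1 with
                  ⟨⟨h1, _⟩ | ⟨_, _, h3, _⟩ | ⟨h1, _⟩, _⟩ |
                  ⟨_, _, _, _, h5⟩ | ⟨h1, _⟩ | ⟨h1, _, _, _, _⟩
                · exact hxa h1
                · exact h3 hu0a
                · exact hax h1
                · exact h5 hqp
                · exact hax h1
                · exact hax h1
          · exact Set.mem_insert_iff.2 (Or.inr ⟨x, Or.inr (Or.inl ⟨hxQ, o.trans hau hqp⟩), rfl⟩)
          · by_cases hxa : le ↑x a
            · exact absurd (o.trans hqp hxa) hua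
            · by_cases hax : le a ↑x
              · exact Set.mem_insert_iff.2 (Or.inr ⟨x, Or.inr (Or.inl ⟨hxQ, hax⟩), rfl⟩)
              · refine Set.mem_insert_iff.2 (Or.inr ⟨x, Or.inr (Or.inr
                  ⟨hxQ, hxa, hax, fun hxD => ?_⟩), rfl⟩)
                exact huD (closD u huQ x hxD ((rrel_def le a u x).2
                  (Or.inl ⟨Or.inr (Or.inl ⟨hua, hau, hxa, hax⟩), hqp⟩)))
    have hDU' : ∀ p ∈ D', ∀ q ∈ U', le p q ∧ p ≠ q := by
      rintro p ⟨d, ⟨hdD, hda⟩, rfl⟩ q hq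
      rcases Set.mem_insert_iff.1 hq with rfl | ⟨u, hu, rfl⟩
      · exact ⟨hda, d.2⟩
      · rcases hu with huU | ⟨huQ, hau⟩ | ⟨huQ, hua, hau, huD⟩
        · exact ⟨rrel_A_A_le o (hDU d hdD u huU).1 hda,
            fun h => (hDU d hdD u huU).2 (Subtype.coe_injective h)⟩
        · exact ⟨o.trans hda hau, fun h => hAC o d hda (by rw [h]; exact hau)⟩
        · have hnud : ¬le ↑u ↑d := fun h => hua (o.trans h hda)
          have hdu : le ↑d ↑u := by
            by_contra hn
            exact huD (closD u huQ d hdD ((rrel_def le a u d).2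
              (Or.inr (Or.inl ⟨hua, hau, hda, hnud, hn⟩))))
          exact ⟨hdu, fun h => hua (by rw [← h]; exact hda)⟩
    obtain ⟨s, hsQ0, hsD', hsU', hsI⟩ :=
      hext Q0 hQ0fin D' U' hD'Q hU'Q hdis' closD' closU' hDU'
    have hsa := hsU' a (Set.mem_insert _ _)
    refine ⟨⟨s, hsa.2⟩, fun h => hsQ0 (Set.mem_insert_iff.2 (Or.inr ⟨⟨s, hsa.2⟩, h, rfl⟩)),
      ?_, ?_, ?_⟩
    · intro d hdD
      by_cases hda : le ↑d a
      · have h := hsD' ↑d ⟨d, ⟨hdD, hda⟩, rfl⟩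
        exact ⟨(rrel_def le a d ⟨s, hsa.2⟩).2 (Or.inl ⟨Or.inl ⟨hda, hsa.1⟩, h.1⟩),
          fun he => h.2 (congrArg Subtype.val he)⟩
      · by_cases had : le a ↑d
        · refine ⟨(rrel_def le a d ⟨s, hsa.2⟩).2 (Or.inr (Or.inr (Or.inl ⟨had, hsa.1⟩))),
            fun he => ?_⟩
          rw [he] at hda; exact hda hsa.1
        · have hdQ0 : ↑d ∈ Q0 := Set.mem_insert_iff.2 (Or.inr ⟨d, hDQ hdD, rfl⟩)
          have hdD' : ↑d ∉ D' := by
            rintro ⟨d', ⟨-, hd'a⟩, hval⟩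
            exact hda (Subtype.coe_injective hval ▸ hd'a)
          have hdU' : ↑d ∉ U' := by
            intro h
            rcases Set.mem_insert_iff.1 h with h | ⟨u, hu, hval⟩
            · exact d.2 h
            · rw [Subtype.coe_injective hval] at hu
              rcases hu with h | h | h
              · exact Set.disjoint_left.1 hdis hdD h
              · exact had h.2
              · exact h.2.2.2 hdD
          obtain ⟨hi1, hi2⟩ := hsI ↑d hdQ0 hdD' hdU'
          refine ⟨(rrel_def le a d ⟨s, hsa.2⟩).2
            (Or.inr (Or.inl ⟨hda, had, hsa.1, hi2, hi1⟩)), fun he => ?_⟩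
          rw [he] at hda; exact hda hsa.1
    · intro u huU
      have h := hsU' ↑u (Set.mem_insert_iff.2 (Or.inr ⟨u, Or.inl huU, rfl⟩))
      exact ⟨(rrel_def le a ⟨s, hsa.2⟩ u).2 (Or.inl ⟨Or.inl ⟨hsa.1, fU u huU⟩, h.1⟩),
        fun he => h.2 (congrArg Subtype.val he)⟩
    · intro x hxQ hxD hxU
      by_cases hax : le a ↑x
      · exact absurd (fC x hxQ hax) hxD
      by_cases hxa : le ↑x a
      · have hxQ0 : ↑x ∈ Q0 := Set.mem_insert_iff.2 (Or.inr ⟨x, hxQ, rfl⟩)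
        have hxD' : ↑x ∉ D' := by
          rintro ⟨d, ⟨hdD, -⟩, hval⟩
          exact hxD (Subtype.coe_injective hval ▸ hdD)
        have hxU' : ↑x ∉ U' := by
          intro h
          rcases Set.mem_insert_iff.1 h with h | ⟨u, hu, hval⟩
          · exact x.2 h
          · rw [Subtype.coe_injective hval] at hu
            rcases hu with h | h | h
            · exact hxU h
            · exact hax h.2
            · exact h.2.1 hxa
        obtain ⟨hi1, hi2⟩ := hsI ↑x hxQ0 hxD' hxU'
        refine ⟨fun hr => ?_, fun hr => ?_⟩
        · rcases (rrel_def le a ⟨s, hsa.2⟩ x).1 hr with ⟨⟨_, _⟩ | ⟨h1, _⟩ | ⟨h1, _⟩, hle⟩ |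
            ⟨h1, _, _, _, _⟩ | ⟨h1, _⟩ | ⟨h1, _, _, _, _⟩
          · exact hi1 hle
          · exact h1 hsa.1
          · exact hAC o ⟨s, hsa.2⟩ hsa.1 h1
          · exact h1 hsa.1
          · exact hAC o ⟨s, hsa.2⟩ hsa.1 h1
          · exact hAC o ⟨s, hsa.2⟩ hsa.1 h1
        · rcases (rrel_def le a x ⟨s, hsa.2⟩).1 hr with ⟨⟨_, _⟩ | ⟨h1, _⟩ | ⟨h1, _⟩, hle⟩ |
            ⟨h1, _, _, _, _⟩ | ⟨h1, _⟩ | ⟨h1, _, _, _, _⟩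
          · exact hi2 hle
          · exact h1 hxa
          · exact hax h1
          · exact h1 hxa
          · exact hax h1
          · exact hax h1
      · have h := hsU' ↑x (Set.mem_insert_iff.2 (Or.inr ⟨x, Or.inr (Or.inr
          ⟨hxQ, hxa, hax, hxD⟩), rfl⟩))
        refine ⟨fun hr => ?_, fun hr => ?_⟩
        · rcases (rrel_def le a ⟨s, hsa.2⟩ x).1 hr with ⟨⟨_, h2⟩ | ⟨h1, _⟩ | ⟨_, h2⟩, _⟩ |
            ⟨h1, _, _, _, _⟩ | ⟨h1, _⟩ | ⟨h1, _, _, _, _⟩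
          · exact hxa h2
          · exact h1 hsa.1
          · exact hax h2
          · exact h1 hsa.1
          · exact hAC o ⟨s, hsa.2⟩ hsa.1 h1
          · exact hAC o ⟨s, hsa.2⟩ hsa.1 h1
        · rcases (rrel_def le a x ⟨s, hsa.2⟩).1 hr with ⟨⟨h1, _⟩ | ⟨_, _, h3, _⟩ | ⟨h1, _⟩, _⟩ |
            ⟨_, _, _, _, h5⟩ | ⟨h1, _⟩ | ⟨h1, _, _, _, _⟩
          · exact hxa h1
          · exact h3 hsa.1
          · exact hax h1
          · exact h5 h.1
          · exact hax h1
          · exact hax h1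

  by_cases hcC : ∃ u ∈ U, le a ↑u
  · obtain ⟨u0, hu0U, hau0⟩ := hcC
    have fD : ∀ d ∈ D, le a ↑d := fun d hd => rrel_C_left o (hDU d hd u0 hu0U).1 hau0
    have fA : ∀ x ∈ Q, le ↑x a → x ∈ U := fun x hx hxa =>
      closU x hx u0 hu0U ((rrel_def le a u0 x).2 (Or.inr (Or.inr (Or.inl ⟨hau0, hxa⟩))))
    set Q0 : Set P := insert a (Subtype.val '' Q) with hQ0def
    have hQ0fin : Q0.Finite := (hQ.image _).insert a
    set D' : Set P := insert a (Subtype.val ''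
      {x | x ∈ D ∨ (x ∈ Q ∧ le ↑x a) ∨ (x ∈ Q ∧ ¬le ↑x a ∧ ¬le a ↑x ∧ x ∉ U)}) with hD'def
    set U' : Set P := Subtype.val '' {u | u ∈ U ∧ le a ↑u} with hU'def
    have hD'Q : D' ⊆ Q0 := by
      rintro p hp
      rcases Set.mem_insert_iff.1 hp with rfl | ⟨u, hu, rfl⟩
      · exact Set.mem_insert _ _
      · rcases hu with h | h | h
        · exact Set.mem_insert_iff.2 (Or.inr ⟨u, hDQ h, rfl⟩)
        · exact Set.mem_insert_iff.2 (Or.inr ⟨u, h.1, rfl⟩)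
        · exact Set.mem_insert_iff.2 (Or.inr ⟨u, h.1, rfl⟩)
    have hU'Q : U' ⊆ Q0 := by
      rintro p ⟨u, ⟨huU, -⟩, rfl⟩
      exact Set.mem_insert_iff.2 (Or.inr ⟨u, hUQ huU, rfl⟩)
    have hdis' : Disjoint D' U' := by
      rw [Set.disjoint_left]
      intro p hpD hpU
      obtain ⟨u, ⟨huU, hau⟩, rfl⟩ := hpU
      rcases Set.mem_insert_iff.1 hpD with h | ⟨x, hx, hval⟩
      · exact u.2 h
      · rw [Subtype.coe_injective hval] at hx
        rcases hx with h | h | h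
        · exact Set.disjoint_left.1 hdis h huU
        · exact hAC o u h.2 hau
        · exact h.2.2.1 hau
    have closD' : ∀ p ∈ Q0, ∀ q ∈ D', le p q → p ∈ D' := by
      intro p hp q hq hpq
      rcases Set.mem_insert_iff.1 hp with rfl | ⟨x, hxQ, rfl⟩
      · exact Set.mem_insert _ _
      · rcases Set.mem_insert_iff.1 hq with rfl | ⟨y, hy, rfl⟩
        · exact Set.mem_insert_iff.2 (Or.inr ⟨x, Or.inr (Or.inl ⟨hxQ, hpq⟩), rfl⟩)
        · rcases hy with hyD | ⟨hyQ, hya⟩ | ⟨hyQ, hya, hay, hyU⟩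
          · by_cases hxa : le ↑x a
            · exact Set.mem_insert_iff.2 (Or.inr ⟨x, Or.inr (Or.inl ⟨hxQ, hxa⟩), rfl⟩)
            · by_cases hax : le a ↑x
              · exact Set.mem_insert_iff.2 (Or.inr ⟨x, Or.inl (closD x hxQ y hyD
                  ((rrel_def le a x y).2 (Or.inl ⟨Or.inr (Or.inr ⟨hax, fD y hyD⟩), hpq⟩))), rfl⟩)
              · refine Set.mem_insert_iff.2 (Or.inr ⟨x, Or.inr (Or.inr
                  ⟨hxQ, hxa, hax, fun hxU => ?_⟩), rfl⟩)
                rcases (rrel_def le a y x).1 (hDU y hyD x hxU).1 with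
                  ⟨⟨h1, _⟩ | ⟨_, h2, _, _⟩ | ⟨_, h2⟩, _⟩ |
                  ⟨_, h2, _, _, _⟩ | ⟨_, h2⟩ | ⟨_, _, _, _, h5⟩
                · exact hAC o y h1 (fD y hyD)
                · exact h2 (fD y hyD)
                · exact hax h2
                · exact h2 (fD y hyD)
                · exact hxa h2
                · exact h5 hpq
          · exact Set.mem_insert_iff.2 (Or.inr ⟨x, Or.inr (Or.inl
              ⟨hxQ, o.trans hpq hya⟩), rfl⟩)
          · by_cases hxa : le ↑x a
            · exact Set.mem_insert_iff.2 (Or.inr ⟨x, Or.inr (Or.inl ⟨hxQ, hxa⟩), rfl⟩)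
            · by_cases hax : le a ↑x
              · exact absurd (o.trans hax hpq) hay
              · refine Set.mem_insert_iff.2 (Or.inr ⟨x, Or.inr (Or.inr
                  ⟨hxQ, hxa, hax, fun hxU => ?_⟩), rfl⟩)
                exact hyU (closU y hyQ x hxU ((rrel_def le a x y).2
                  (Or.inl ⟨Or.inr (Or.inl ⟨hxa, hax, hya, hay⟩), hpq⟩)))
    have closU' : ∀ p ∈ Q0, ∀ q ∈ U', le q p → p ∈ U' := by
      intro p hp q hq hqp
      obtain ⟨u, ⟨huU, hau⟩, rfl⟩ := hq
      rcases Set.mem_insert_iff.1 hp with rfl | ⟨x, hxQ, rfl⟩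
      · exact (hAC o u hqp hau).elim
      · have hax : le a ↑x := o.trans hau hqp
        exact ⟨x, ⟨closU x hxQ u huU ((rrel_def le a u x).2
          (Or.inl ⟨Or.inr (Or.inr ⟨hau, hax⟩), hqp⟩)), hax⟩, rfl⟩
    have hDU' : ∀ p ∈ D', ∀ q ∈ U', le p q ∧ p ≠ q := by
      intro p hp q hq
      obtain ⟨u, ⟨huU, hau⟩, rfl⟩ := hq
      rcases Set.mem_insert_iff.1 hp with rfl | ⟨y, hy, rfl⟩
      · exact ⟨hau, fun h => u.2 h.symm⟩
      · rcases hy with hyD | ⟨hyQ, hya⟩ | ⟨hyQ, hya, hay, hyU⟩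
        · exact ⟨rrel_C_C_le o (hDU y hyD u huU).1 hau,
            fun h => (hDU y hyD u huU).2 (Subtype.coe_injective h)⟩
        · exact ⟨o.trans hya hau, fun h => hAC o y hya (by rw [h]; exact hau)⟩
        · have hnuy : ¬le ↑u ↑y := fun h => hay (o.trans hau h)
          have hyu : le ↑y ↑u := by
            by_contra hn
            exact hyU (closU y hyQ u huU ((rrel_def le a u y).2
              (Or.inr (Or.inr (Or.inr ⟨hau, hya, hay, hnuy, hn⟩)))))
          exact ⟨hyu, fun h => hay (by rw [h]; exact hau)⟩
    obtain ⟨s, hsQ0, hsD', hsU', hsI⟩ :=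
      hext Q0 hQ0fin D' U' hD'Q hU'Q hdis' closD' closU' hDU'
    have hsa := hsD' a (Set.mem_insert _ _)
    have hsne : s ≠ a := fun h => hsa.2 h.symm
    refine ⟨⟨s, hsne⟩, fun h => hsQ0 (Set.mem_insert_iff.2 (Or.inr ⟨⟨s, hsne⟩, h, rfl⟩)),
      ?_, ?_, ?_⟩
    · intro d hdD
      have h := hsD' ↑d (Set.mem_insert_iff.2 (Or.inr ⟨d, Or.inl hdD, rfl⟩))
      exact ⟨(rrel_def le a d ⟨s, hsne⟩).2 (Or.inl ⟨Or.inr (Or.inr ⟨fD d hdD, hsa.1⟩), h.1⟩),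
        fun he => h.2 (congrArg Subtype.val he)⟩
    · intro u huU
      by_cases hau : le a ↑u
      · have h := hsU' ↑u ⟨u, ⟨huU, hau⟩, rfl⟩
        exact ⟨(rrel_def le a ⟨s, hsne⟩ u).2 (Or.inl ⟨Or.inr (Or.inr ⟨hsa.1, hau⟩), h.1⟩),
          fun he => h.2 (congrArg Subtype.val he)⟩
      · by_cases hua : le ↑u a
        · refine ⟨(rrel_def le a ⟨s, hsne⟩ u).2 (Or.inr (Or.inr (Or.inl ⟨hsa.1, hua⟩))),
            fun he => ?_⟩
          rw [← he] at hau; exact hau hsa.1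
        · have huQ0 : ↑u ∈ Q0 := Set.mem_insert_iff.2 (Or.inr ⟨u, hUQ huU, rfl⟩)
          have huD' : ↑u ∉ D' := by
            intro h
            rcases Set.mem_insert_iff.1 h with h | ⟨x, hx, hval⟩
            · exact u.2 h
            · rw [Subtype.coe_injective hval] at hx
              rcases hx with h | h | h
              · exact Set.disjoint_left.1 hdis h huU
              · exact hua h.2
              · exact h.2.2.2 huU
          have huU' : ↑u ∉ U' := by
            rintro ⟨x, ⟨-, hax⟩, hval⟩
            exact hau (Subtype.coe_injective hval ▸ hax)
          obtain ⟨hi1, hi2⟩ := hsI ↑u huQ0 huD' huU'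
          refine ⟨(rrel_def le a ⟨s, hsne⟩ u).2
            (Or.inr (Or.inr (Or.inr ⟨hsa.1, hua, hau, hi1, hi2⟩))), fun he => ?_⟩
          rw [← he] at hau; exact hau hsa.1
    · intro x hxQ hxD hxU
      by_cases hxa : le ↑x a
      · exact absurd (fA x hxQ hxa) hxU
      by_cases hax : le a ↑x
      · have hxQ0 : ↑x ∈ Q0 := Set.mem_insert_iff.2 (Or.inr ⟨x, hxQ, rfl⟩)
        have hxD' : ↑x ∉ D' := by
          intro h
          rcases Set.mem_insert_iff.1 h with h | ⟨y, hy, hval⟩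
          · exact x.2 h
          · rw [Subtype.coe_injective hval] at hy
            rcases hy with h | h | h
            · exact hxD h
            · exact hxa h.2
            · exact h.2.2.1 hax
        have hxU' : ↑x ∉ U' := by
          rintro ⟨y, ⟨hyU, -⟩, hval⟩
          exact hxU (Subtype.coe_injective hval ▸ hyU)
        obtain ⟨hi1, hi2⟩ := hsI ↑x hxQ0 hxD' hxU'
        refine ⟨fun hr => ?_, fun hr => ?_⟩
        · rcases (rrel_def le a ⟨s, hsne⟩ x).1 hr with ⟨⟨h1, _⟩ | ⟨_, h2, _, _⟩ | ⟨_, _⟩, hle⟩ |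
            ⟨_, h2, _, _, _⟩ | ⟨_, h2⟩ | ⟨_, _, h3, _, _⟩
          · exact hAC o ⟨s, hsne⟩ h1 hsa.1
          · exact h2 hsa.1
          · exact hi1 hle
          · exact h2 hsa.1
          · exact hxa h2
          · exact h3 hax
        · rcases (rrel_def le a x ⟨s, hsne⟩).1 hr with ⟨⟨h1, _⟩ | ⟨_, h2, _, _⟩ | ⟨_, _⟩, hle⟩ |
            ⟨_, h2, _, _, _⟩ | ⟨_, h2⟩ | ⟨_, _, h3, _, _⟩
          · exact hxa h1
          · exact h2 hax
          · exact hi2 hle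
          · exact h2 hax
          · exact hAC o ⟨s, hsne⟩ h2 hsa.1
          · exact h3 hsa.1
      · have h := hsD' ↑x (Set.mem_insert_iff.2 (Or.inr ⟨x, Or.inr (Or.inr
          ⟨hxQ, hxa, hax, hxU⟩), rfl⟩))
        refine ⟨fun hr => ?_, fun hr => ?_⟩
        · rcases (rrel_def le a ⟨s, hsne⟩ x).1 hr with ⟨⟨h1, _⟩ | ⟨_, h2, _, _⟩ | ⟨_, h2⟩, _⟩ |
            ⟨_, h2, _, _, _⟩ | ⟨_, h2⟩ | ⟨_, _, _, _, h5⟩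
          · exact hAC o ⟨s, hsne⟩ h1 hsa.1
          · exact h2 hsa.1
          · exact hax h2
          · exact h2 hsa.1
          · exact hxa h2
          · exact h5 h.1
        · rcases (rrel_def le a x ⟨s, hsne⟩).1 hr with ⟨⟨h1, _⟩ | ⟨_, _, _, h4⟩ | ⟨h1, _⟩, _⟩ |
            ⟨_, _, h3, _, _⟩ | ⟨h1, _⟩ | ⟨h1, _, _, _, _⟩
          · exact hxa h1
          · exact h4 hsa.1
          · exact hax h1
          · exact hAC o ⟨s, hsne⟩ h3 hsa.1
          · exact hax h1
          · exact hax h1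
  push_neg at hcA hcC
  · set Q0 : Set P := insert a (Subtype.val '' Q) with hQ0def
    have hQ0fin : Q0.Finite := (hQ.image _).insert a
    set D' : Set P := Subtype.val ''
      {x | (x ∈ D ∧ ¬le a ↑x) ∨ (x ∈ Q ∧ le ↑x a ∧ x ∉ U)} with hD'def
    set U' : Set P := Subtype.val ''
      {x | (x ∈ U ∧ ¬le ↑x a) ∨ (x ∈ Q ∧ le a ↑x ∧ x ∉ D)} with hU'def
    have hD'Q : D' ⊆ Q0 := by
      rintro p ⟨x, hx, rfl⟩
      rcases hx with h | h
      · exact Set.mem_insert_iff.2 (Or.inr ⟨x, hDQ h.1, rfl⟩)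
      · exact Set.mem_insert_iff.2 (Or.inr ⟨x, h.1, rfl⟩)
    have hU'Q : U' ⊆ Q0 := by
      rintro p ⟨x, hx, rfl⟩
      rcases hx with h | h
      · exact Set.mem_insert_iff.2 (Or.inr ⟨x, hUQ h.1, rfl⟩)
      · exact Set.mem_insert_iff.2 (Or.inr ⟨x, h.1, rfl⟩)
    have hdis' : Disjoint D' U' := by
      rw [Set.disjoint_left]
      rintro p ⟨x, hx, rfl⟩ ⟨y, hy, hval⟩
      rw [Subtype.coe_injective hval] at hy
      rcases hx with hx | hx <;> rcases hy with hy | hy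
      · exact Set.disjoint_left.1 hdis hx.1 hy.1
      · exact hy.2.2 hx.1
      · exact hx.2.2 hy.1
      · exact hAC o x hx.2.1 hy.2.1
    have closD' : ∀ p ∈ Q0, ∀ q ∈ D', le p q → p ∈ D' := by
      intro p hp q hq hpq
      obtain ⟨y, hy, rfl⟩ := hq
      rcases hy with ⟨hyD, hay⟩ | ⟨hyQ, hya, hyU⟩
      · have hya := hcA y hyD
        rcases Set.mem_insert_iff.1 hp with rfl | ⟨x, hxQ, rfl⟩
        · exact absurd hpq hay
        · by_cases hxa : le ↑x a
          · refine ⟨x, Or.inr ⟨hxQ, hxa, fun hxU => ?_⟩, rfl⟩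
            rcases (rrel_def le a y x).1 (hDU y hyD x hxU).1 with
              ⟨⟨h1, _⟩ | ⟨_, _, h3, _⟩ | ⟨h1, _⟩, _⟩ |
              ⟨_, _, _, _, h5⟩ | ⟨h1, _⟩ | ⟨h1, _, _, _, _⟩
            · exact hya h1
            · exact h3 hxa
            · exact hay h1
            · exact h5 hpq
            · exact hay h1
            · exact hay h1
          · by_cases hax : le a ↑x
            · exact absurd (o.trans hax hpq) hay
            · exact ⟨x, Or.inl ⟨closD x hxQ y hyD ((rrel_def le a x y).2
                (Or.inl ⟨Or.inr (Or.inl ⟨hxa, hax, hya, hay⟩), hpq⟩)), hax⟩, rfl⟩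
      · rcases Set.mem_insert_iff.1 hp with rfl | ⟨x, hxQ, rfl⟩
        · exact (hAC o y hya hpq).elim
        · have hxa : le ↑x a := o.trans hpq hya
          refine ⟨x, Or.inr ⟨hxQ, hxa, fun hxU => ?_⟩, rfl⟩
          exact hyU (closU y hyQ x hxU ((rrel_def le a x y).2
            (Or.inl ⟨Or.inl ⟨hxa, hya⟩, hpq⟩)))
    have closU' : ∀ p ∈ Q0, ∀ q ∈ U', le q p → p ∈ U' := by
      intro p hp q hq hqp
      obtain ⟨u, hu, rfl⟩ := hq
      rcases hu with ⟨huU, hua⟩ | ⟨hcQ, hac, hcD⟩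
      · have hau := hcC u huU
        rcases Set.mem_insert_iff.1 hp with rfl | ⟨x, hxQ, rfl⟩
        · exact absurd hqp hua
        · by_cases hax : le a ↑x
          · refine ⟨x, Or.inr ⟨hxQ, hax, fun hxD => ?_⟩, rfl⟩
            rcases (rrel_def le a x u).1 (hDU x hxD u huU).1 with
              ⟨⟨h1, _⟩ | ⟨_, h2, _, _⟩ | ⟨_, h2⟩, _⟩ |
              ⟨_, h2, _, _, _⟩ | ⟨_, h2⟩ | ⟨_, _, _, _, h5⟩
            · exact hAC o x h1 hax
            · exact h2 hax
            · exact hau h2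
            · exact h2 hax
            · exact hua h2
            · exact h5 hqp
          · by_cases hxa : le ↑x a
            · exact absurd (o.trans hqp hxa) hua
            · exact ⟨x, Or.inl ⟨closU x hxQ u huU ((rrel_def le a u x).2
                (Or.inl ⟨Or.inr (Or.inl ⟨hua, hau, hxa, hax⟩), hqp⟩)), hxa⟩, rfl⟩
      · rcases Set.mem_insert_iff.1 hp with rfl | ⟨x, hxQ, rfl⟩
        · exact (hAC o u hqp hac).elim
        · have hax : le a ↑x := o.trans hac hqp
          refine ⟨x, Or.inr ⟨hxQ, hax, fun hxD => ?_⟩, rfl⟩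
          exact hcD (closD u hcQ x hxD ((rrel_def le a u x).2
            (Or.inl ⟨Or.inr (Or.inr ⟨hac, hax⟩), hqp⟩)))
    have hDU' : ∀ p ∈ D', ∀ q ∈ U', le p q ∧ p ≠ q := by
      rintro p ⟨d, hd, rfl⟩ q ⟨u, hu, rfl⟩
      rcases hd with ⟨hdD, had⟩ | ⟨hxQ, hxa, hxU⟩ <;>
        rcases hu with ⟨huU, hua⟩ | ⟨hcQ, hac, hcD⟩
      · have hdu : le ↑d ↑u := by
          rcases (rrel_def le a d u).1 (hDU d hdD u huU).1 with
            ⟨⟨h1, _⟩ | ⟨_, _, _, _⟩ | ⟨h1, _⟩, hle⟩ |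
            ⟨_, _, h3, _, _⟩ | ⟨h1, _⟩ | ⟨h1, _, _, _, _⟩
          · exact absurd h1 (hcA d hdD)
          · exact hle
          · exact absurd h1 had
          · exact absurd h3 hua
          · exact absurd h1 had
          · exact absurd h1 had
        exact ⟨hdu, fun h => (hDU d hdD u huU).2 (Subtype.coe_injective h)⟩
      · have hncd : ¬le ↑u ↑d := fun h => had (o.trans hac h)
        have hdc : le ↑d ↑u := by
          by_contra hn
          exact hcD (closD u hcQ d hdD ((rrel_def le a u d).2
            (Or.inr (Or.inr (Or.inr ⟨hac, hcA d hdD, had, hncd, hn⟩)))))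
        exact ⟨hdc, fun h => had (by rw [h]; exact hac)⟩
      · have hnux : ¬le ↑u ↑d := fun h => hua (o.trans h hxa)
        have hxu : le ↑d ↑u := by
          by_contra hn
          exact hxU (closU d hxQ u huU ((rrel_def le a u d).2
            (Or.inr (Or.inl ⟨hua, hcC u huU, hxa, hnux, hn⟩))))
        exact ⟨hxu, fun h => hua (by rw [← h]; exact hxa)⟩
      · exact ⟨o.trans hxa hac, fun h => hAC o d hxa (by rw [h]; exact hac)⟩
    obtain ⟨s, hsQ0, hsD', hsU', hsI⟩ :=
      hext Q0 hQ0fin D' U' hD'Q hU'Q hdis' closD' closU' hDU'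
    have haD' : a ∉ D' := by rintro ⟨x, -, hval⟩; exact x.2 hval
    have haU' : a ∉ U' := by rintro ⟨x, -, hval⟩; exact x.2 hval
    obtain ⟨hia1, hia2⟩ := hsI a (Set.mem_insert _ _) haD' haU'
    have hsne : s ≠ a := fun h => hia1 (by rw [h]; exact o.refl a)
    refine ⟨⟨s, hsne⟩, fun h => hsQ0 (Set.mem_insert_iff.2 (Or.inr ⟨⟨s, hsne⟩, h, rfl⟩)),
      ?_, ?_, ?_⟩
    · intro d hdD
      have hda := hcA d hdD
      by_cases had : le a ↑d
      · have hdQ0 : ↑d ∈ Q0 := Set.mem_insert_iff.2 (Or.inr ⟨d, hDQ hdD, rfl⟩)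
        have hdD' : ↑d ∉ D' := by
          rintro ⟨x, hx, hval⟩
          rw [Subtype.coe_injective hval] at hx
          rcases hx with h | h
          · exact h.2 had
          · exact hda h.2.1
        have hdU' : ↑d ∉ U' := by
          rintro ⟨x, hx, hval⟩
          rw [Subtype.coe_injective hval] at hx
          rcases hx with h | h
          · exact Set.disjoint_left.1 hdis hdD h.1
          · exact h.2.2 hdD
        obtain ⟨hi1, hi2⟩ := hsI ↑d hdQ0 hdD' hdU'
        refine ⟨(rrel_def le a d ⟨s, hsne⟩).2
          (Or.inr (Or.inr (Or.inr ⟨had, hia1, hia2, hi2, hi1⟩))), fun he => ?_⟩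
        rw [he] at had; exact hia2 had
      · have h := hsD' ↑d ⟨d, Or.inl ⟨hdD, had⟩, rfl⟩
        exact ⟨(rrel_def le a d ⟨s, hsne⟩).2
          (Or.inl ⟨Or.inr (Or.inl ⟨hda, had, hia1, hia2⟩), h.1⟩),
          fun he => h.2 (congrArg Subtype.val he)⟩
    · intro u huU
      have hau := hcC u huU
      by_cases hua : le ↑u a
      · have huQ0 : ↑u ∈ Q0 := Set.mem_insert_iff.2 (Or.inr ⟨u, hUQ huU, rfl⟩)
        have huD' : ↑u ∉ D' := by
          rintro ⟨x, hx, hval⟩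
          rw [Subtype.coe_injective hval] at hx
          rcases hx with h | h
          · exact Set.disjoint_left.1 hdis h.1 huU
          · exact h.2.2 huU
        have huU' : ↑u ∉ U' := by
          rintro ⟨x, hx, hval⟩
          rw [Subtype.coe_injective hval] at hx
          rcases hx with h | h
          · exact h.2 hua
          · exact hau h.2.1
        obtain ⟨hi1, hi2⟩ := hsI ↑u huQ0 huD' huU'
        refine ⟨(rrel_def le a ⟨s, hsne⟩ u).2
          (Or.inr (Or.inl ⟨hia1, hia2, hua, hi1, hi2⟩)), fun he => ?_⟩
        rw [← he] at hua; exact hia1 hua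
      · have h := hsU' ↑u ⟨u, Or.inl ⟨huU, hua⟩, rfl⟩
        exact ⟨(rrel_def le a ⟨s, hsne⟩ u).2
          (Or.inl ⟨Or.inr (Or.inl ⟨hia1, hia2, hua, hau⟩), h.1⟩),
          fun he => h.2 (congrArg Subtype.val he)⟩
    · intro x hxQ hxD hxU
      by_cases hxa : le ↑x a
      · have h := hsD' ↑x ⟨x, Or.inr ⟨hxQ, hxa, hxU⟩, rfl⟩
        refine ⟨fun hr => ?_, fun hr => ?_⟩
        · rcases (rrel_def le a ⟨s, hsne⟩ x).1 hr with ⟨⟨h1, _⟩ | ⟨_, _, h3, _⟩ | ⟨h1, _⟩, _⟩ |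
            ⟨_, _, _, _, h5⟩ | ⟨h1, _⟩ | ⟨h1, _, _, _, _⟩
          · exact hia1 h1
          · exact h3 hxa
          · exact hia2 h1
          · exact h5 h.1
          · exact hia2 h1
          · exact hia2 h1
        · rcases (rrel_def le a x ⟨s, hsne⟩).1 hr with ⟨⟨_, h2⟩ | ⟨h1, _⟩ | ⟨h1, _⟩, _⟩ |
            ⟨h1, _, _, _, _⟩ | ⟨h1, _⟩ | ⟨h1, _, _, _, _⟩
          · exact hia1 h2
          · exact h1 hxa
          · exact hAC o x hxa h1
          · exact h1 hxa
          · exact hAC o x hxa h1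
          · exact hAC o x hxa h1
      by_cases hax : le a ↑x
      · have h := hsU' ↑x ⟨x, Or.inr ⟨hxQ, hax, hxD⟩, rfl⟩
        refine ⟨fun hr => ?_, fun hr => ?_⟩
        · rcases (rrel_def le a ⟨s, hsne⟩ x).1 hr with ⟨⟨h1, _⟩ | ⟨_, _, _, h4⟩ | ⟨h1, _⟩, _⟩ |
            ⟨_, _, h3, _, _⟩ | ⟨h1, _⟩ | ⟨h1, _, _, _, _⟩
          · exact hia1 h1
          · exact h4 hax
          · exact hia2 h1
          · exact hAC o x h3 hax
          · exact hia2 h1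
          · exact hia2 h1
        · rcases (rrel_def le a x ⟨s, hsne⟩).1 hr with ⟨⟨h1, _⟩ | ⟨_, h2, _, _⟩ | ⟨_, h2⟩, _⟩ |
            ⟨_, h2, _, _, _⟩ | ⟨_, h2⟩ | ⟨_, _, _, _, h5⟩
          · exact hAC o x h1 hax
          · exact h2 hax
          · exact hia2 h2
          · exact h2 hax
          · exact hia1 h2
          · exact h5 h.1
      · have hxD' : ↑x ∉ D' := by
          rintro ⟨y, hy, hval⟩
          rw [Subtype.coe_injective hval] at hy
          rcases hy with h | h
          · exact hxD h.1
          · exact hxa h.2.1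
        have hxU' : ↑x ∉ U' := by
          rintro ⟨y, hy, hval⟩
          rw [Subtype.coe_injective hval] at hy
          rcases hy with h | h
          · exact hxU h.1
          · exact hax h.2.1
        obtain ⟨hi1, hi2⟩ := hsI ↑x (Set.mem_insert_iff.2 (Or.inr ⟨x, hxQ, rfl⟩)) hxD' hxU'
        refine ⟨fun hr => ?_, fun hr => ?_⟩
        · rcases (rrel_def le a ⟨s, hsne⟩ x).1 hr with ⟨⟨h1, _⟩ | ⟨_, _, _, _⟩ | ⟨h1, _⟩, hle⟩ |
            ⟨_, _, h3, _, _⟩ | ⟨h1, _⟩ | ⟨h1, _, _, _, _⟩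
          · exact hia1 h1
          · exact hi1 hle
          · exact hia2 h1
          · exact hxa h3
          · exact hia2 h1
          · exact hia2 h1
        · rcases (rrel_def le a x ⟨s, hsne⟩).1 hr with ⟨⟨h1, _⟩ | ⟨_, _, _, _⟩ | ⟨h1, _⟩, hle⟩ |
            ⟨_, _, h3, _, _⟩ | ⟨h1, _⟩ | ⟨h1, _, _, _, _⟩
          · exact hxa h1
          · exact hi2 hle
          · exact hax h1
          · exact hia1 h3
          · exact hax h1
          · exact hax h1

end RotExt


theorem stmt16 [Countable P] (le : P → P → Prop) [IsPartialOrder P le]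
    (hext : ExtProp le) (a : P)
    (le' : {x : P // x ≠ a} → {x : P // x ≠ a} → Prop)
    (hle' : le' = fun x y => le x.1 y.1)
    (A C : Set {x : P // x ≠ a})
    (hA : A = {x | le x.1 a}) (hC : C = {x | le a x.1}) :
    ExtProp (Rot le' A C) ∧
    ∃ e : {x : P // x ≠ a} ≃ P, ∀ x y, Rot le' A C x y ↔ le (e x) (e y) := by
  subst hle' hA hC
  have o : RelOrd le :=
    ⟨fun x => refl_of le x, fun {x y z} h1 h2 => IsTrans.trans x y z h1 h2,
      fun {x y} h1 h2 => antisymm h1 h2⟩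
  have orot : RelOrd (rrel le a) :=
    ⟨rrel_refl o, fun {x y z} h1 h2 => rrel_trans o h1 h2,
      fun {x y} h1 h2 => rrel_antisymm o h1 h2⟩
  have hx : ExtProp (rrel le a) := rrel_ext o hext
  obtain ⟨e, he⟩ := iso_of_extProp orot o hx hext
  exact ⟨hx, e, he⟩
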